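/- If D : S → M is a Jordan (δ,f)-derivation on a 2-torsion-free bimodule M, and x, y ∈ S commute (xy = yx), then D(xy) = D(x)y + f(x)δ(y). -/
import Mathlib


open MulOpposite

/-- For a Jordan `(δ,f)`-derivation `D` on a `2`-torsion-free bimodule `M`, if
`x` and `y` commute then `D(xy) = D(x)y + f(x)δ(y)`. -/
theorem jordan_derivation_on_commuting_elements
    {R S M : Type*} [CommRing R] [Ring S] [Algebra R S]
    [AddCommGroup M] [Module S M] [Module Sᵐᵒᵖ M] [SMulCommClass S Sᵐᵒᵖ M]
    (htf : ∀ m : M, 2 • m = 0 → m = 0)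
    (δ : S → S) (hδadd : ∀ a b : S, δ (a + b) = δ a + δ b)
    (hδmul : ∀ a b : S, δ (a * b) = δ a * b + a * δ b)
    (f : S → M) (hfadd : ∀ a b : S, f (a + b) = f a + f b)
    (hfleft : ∀ a x : S, f (a * x) = a • f x)
    (hfright : ∀ x a : S, f (x * a) = op a • f x)
    (D : S → M) (hDadd : ∀ a b : S, D (a + b) = D a + D b)
    (hJordan : ∀ x : S, D (x * x) = op x • D x + op (δ x) • f x) :
    ∀ x y : S, x * y = y * x → D (x * y) = op y • D x + op (δ y) • f x := by
  -- Step 1: linearization of the Jordan identity on commuting elements.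
  have key2 : ∀ a b : S, a * b = b * a →
      D (a * b) + D (a * b) =
        op b • D a + op a • D b + op (δ b) • f a + op (δ a) • f b := by
    intro a b hc
    have hsq : (a + b) * (a + b) = a * a + (a * b + a * b) + b * b := by
      rw [add_mul, mul_add, mul_add, ← hc]; abel
    have e : D (a * b) + D (a * b) = D ((a + b) * (a + b)) - D (a * a) - D (b * b) := by
      rw [hsq, hDadd, hDadd, hDadd]; abel
    rw [e, hJordan, hJordan, hJordan, hDadd, hδadd, hfadd]
    simp only [op_add, add_smul, smul_add]
    abel
  -- f on commuting elements
  have hfeq : ∀ a b : S, a * b = b * a → op a • f b = op b • f a := by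
    intro a b hc
    rw [← hfright b a, ← hfright a b, hc]
  -- Step 2: the key relation `op a • B(a,b) = 0`.
  have K : ∀ a b : S, a * b = b * a →
      op a • (op b • D a) + op a • (op (δ b) • f a) =
      op a • (op a • D b) + op a • (op (δ a) • f b) := by
    intro a b hc
    have hc1 : a * (a * b) = (a * b) * a := by rw [mul_assoc, hc]
    have hc2 : (a * a) * b = b * (a * a) := by
      rw [mul_assoc, hc, ← mul_assoc, hc, mul_assoc]
    have e1 := key2 a (a * b) hc1
    have e2 := key2 (a * a) b hc2
    rw [← mul_assoc] at e1
    have hEa0 : op (a * b) • D a + op a • D (a * b) + op (δ (a * b)) • f a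
          + op (δ a) • f (a * b)
        = op b • D (a * a) + op (a * a) • D b + op (δ b) • f (a * a)
          + op (δ (a * a)) • f b := e1.symm.trans e2
    have hEa : op b • (op a • D a) + op a • D (a * b) + op b • (op (δ a) • f a)
          + op (δ b) • (op a • f a) + op (δ a) • (op b • f a)
        = op b • (op a • D a) + op b • (op (δ a) • f a) + op a • (op a • D b)
          + op (δ b) • (op a • f a) + op a • (op (δ a) • f b)
          + op (δ a) • (op a • f b) := by
      calc op b • (op a • D a) + op a • D (a * b) + op b • (op (δ a) • f a)
            + op (δ b) • (op a • f a) + op (δ a) • (op b • f a)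
          = op (a * b) • D a + op a • D (a * b) + op (δ (a * b)) • f a
            + op (δ a) • f (a * b) := by
            simp only [hδmul, hfright, hJordan, op_mul, op_add, add_smul, mul_smul,
              smul_add]
            abel
        _ = op b • D (a * a) + op (a * a) • D b + op (δ b) • f (a * a)
            + op (δ (a * a)) • f b := hEa0
        _ = op b • (op a • D a) + op b • (op (δ a) • f a) + op a • (op a • D b)
            + op (δ b) • (op a • f a) + op a • (op (δ a) • f b)
            + op (δ a) • (op a • f b) := by
            simp only [hδmul, hfright, hJordan, op_mul, op_add, add_smul, mul_smul,
              smul_add]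
            abel
    have e3 := key2 a b hc
    have e3x : op a • D (a * b) + op a • D (a * b)
        = op a • (op b • D a) + op a • (op a • D b) + op a • (op (δ b) • f a)
          + op a • (op (δ a) • f b) := by
      calc op a • D (a * b) + op a • D (a * b)
          = op a • (D (a * b) + D (a * b)) := (smul_add _ _ _).symm
        _ = op a • (op b • D a + op a • D b + op (δ b) • f a + op (δ a) • f b) := by
            rw [e3]
        _ = op a • (op b • D a) + op a • (op a • D b) + op a • (op (δ b) • f a)
            + op a • (op (δ a) • f b) := by simp only [smul_add]
    have e4 : op (δ a) • (op a • f b) = op (δ a) • (op b • f a) := by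
      rw [hfeq a b hc]
    have z1 : (op b • (op a • D a) + op a • D (a * b) + op b • (op (δ a) • f a)
          + op (δ b) • (op a • f a) + op (δ a) • (op b • f a))
        - (op b • (op a • D a) + op b • (op (δ a) • f a) + op a • (op a • D b)
          + op (δ b) • (op a • f a) + op a • (op (δ a) • f b)
          + op (δ a) • (op a • f b)) = 0 := sub_eq_zero_of_eq hEa
    have z2 : (op a • D (a * b) + op a • D (a * b))
        - (op a • (op b • D a) + op a • (op a • D b) + op a • (op (δ b) • f a)
          + op a • (op (δ a) • f b)) = 0 := sub_eq_zero_of_eq e3x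
    have z3 : op (δ a) • (op b • f a) - op (δ a) • (op a • f b) = 0 :=
      sub_eq_zero_of_eq e4.symm
    have hz : (op a • (op b • D a) + op a • (op (δ b) • f a))
          - (op a • (op a • D b) + op a • (op (δ a) • f b))
        = (((op b • (op a • D a) + op a • D (a * b) + op b • (op (δ a) • f a)
            + op (δ b) • (op a • f a) + op (δ a) • (op b • f a))
          - (op b • (op a • D a) + op b • (op (δ a) • f a) + op a • (op a • D b)
            + op (δ b) • (op a • f a) + op a • (op (δ a) • f b)
            + op (δ a) • (op a • f b)))
          + ((op b • (op a • D a) + op a • D (a * b) + op b • (op (δ a) • f a)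
            + op (δ b) • (op a • f a) + op (δ a) • (op b • f a))
          - (op b • (op a • D a) + op b • (op (δ a) • f a) + op a • (op a • D b)
            + op (δ b) • (op a • f a) + op a • (op (δ a) • f b)
            + op (δ a) • (op a • f b))))
          - ((op a • D (a * b) + op a • D (a * b))
          - (op a • (op b • D a) + op a • (op a • D b) + op a • (op (δ b) • f a)
            + op a • (op (δ a) • f b)))
          - ((op (δ a) • (op b • f a) - op (δ a) • (op a • f b))
            + (op (δ a) • (op b • f a) - op (δ a) • (op a • f b))) := by abel
    rw [z1, z2, z3] at hz
    have hz' : (op a • (op b • D a) + op a • (op (δ b) • f a))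
        - (op a • (op a • D b) + op a • (op (δ a) • f b)) = 0 := by
      rw [hz]; abel
    exact sub_eq_zero.mp hz'
  -- Step 3: symmetry relation B(a,b) = 0, via a := 1 and a := a + 1.
  have Bzero : ∀ a b : S, a * b = b * a →
      op b • D a + op (δ b) • f a = op a • D b + op (δ a) • f b := by
    intro a b hc
    have h1 := K a b hc
    have h1' := K 1 b (by rw [one_mul, mul_one])
    simp only [op_one, one_smul] at h1'
    -- h1' : op b • D 1 + op (δ b) • f 1 = D b + op (δ 1) • f b
    have h1x : op a • (op b • D 1) + op a • (op (δ b) • f 1)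
        = op a • D b + op a • (op (δ 1) • f b) := by
      calc op a • (op b • D 1) + op a • (op (δ b) • f 1)
          = op a • (op b • D 1 + op (δ b) • f 1) := (smul_add _ _ _).symm
        _ = op a • (D b + op (δ 1) • f b) := by rw [h1']
        _ = op a • D b + op a • (op (δ 1) • f b) := smul_add _ _ _
    have hc' : (a + 1) * b = b * (a + 1) := by
      rw [add_mul, mul_add, one_mul, mul_one, hc]
    have h2 : op a • (op b • D a) + op a • (op b • D 1) + op b • D a + op b • D 1
          + op a • (op (δ b) • f a) + op a • (op (δ b) • f 1) + op (δ b) • f a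
          + op (δ b) • f 1
        = op a • (op a • D b) + op a • D b + op a • D b + D b
          + op a • (op (δ a) • f b) + op (δ a) • f b + op a • (op (δ 1) • f b)
          + op (δ 1) • f b := by
      calc op a • (op b • D a) + op a • (op b • D 1) + op b • D a + op b • D 1
            + op a • (op (δ b) • f a) + op a • (op (δ b) • f 1) + op (δ b) • f a
            + op (δ b) • f 1
          = op (a + 1) • (op b • D (a + 1)) + op (a + 1) • (op (δ b) • f (a + 1)) := by
            simp only [hDadd, hδadd, hfadd, op_add, op_one, add_smul, one_smul,
              smul_add]
            abel
        _ = op (a + 1) • (op (a + 1) • D b) + op (a + 1) • (op (δ (a + 1)) • f b) :=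
            K (a + 1) b hc'
        _ = op a • (op a • D b) + op a • D b + op a • D b + D b
            + op a • (op (δ a) • f b) + op (δ a) • f b + op a • (op (δ 1) • f b)
            + op (δ 1) • f b := by
            simp only [hDadd, hδadd, hfadd, op_add, op_one, add_smul, one_smul,
              smul_add]
            abel
    have z1 : (op a • (op b • D a) + op a • (op (δ b) • f a))
        - (op a • (op a • D b) + op a • (op (δ a) • f b)) = 0 := sub_eq_zero_of_eq h1
    have z2 : (op b • D 1 + op (δ b) • f 1) - (D b + op (δ 1) • f b) = 0 :=
      sub_eq_zero_of_eq h1'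
    have z3 : (op a • (op b • D 1) + op a • (op (δ b) • f 1))
        - (op a • D b + op a • (op (δ 1) • f b)) = 0 := sub_eq_zero_of_eq h1x
    have z4 : (op a • (op b • D a) + op a • (op b • D 1) + op b • D a + op b • D 1
          + op a • (op (δ b) • f a) + op a • (op (δ b) • f 1) + op (δ b) • f a
          + op (δ b) • f 1)
        - (op a • (op a • D b) + op a • D b + op a • D b + D b
          + op a • (op (δ a) • f b) + op (δ a) • f b + op a • (op (δ 1) • f b)
          + op (δ 1) • f b) = 0 := sub_eq_zero_of_eq h2
    have hz : (op b • D a + op (δ b) • f a) - (op a • D b + op (δ a) • f b)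
        = ((op a • (op b • D a) + op a • (op b • D 1) + op b • D a + op b • D 1
            + op a • (op (δ b) • f a) + op a • (op (δ b) • f 1) + op (δ b) • f a
            + op (δ b) • f 1)
          - (op a • (op a • D b) + op a • D b + op a • D b + D b
            + op a • (op (δ a) • f b) + op (δ a) • f b + op a • (op (δ 1) • f b)
            + op (δ 1) • f b))
          - ((op a • (op b • D a) + op a • (op (δ b) • f a))
            - (op a • (op a • D b) + op a • (op (δ a) • f b)))
          - ((op b • D 1 + op (δ b) • f 1) - (D b + op (δ 1) • f b))
          - ((op a • (op b • D 1) + op a • (op (δ b) • f 1))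
            - (op a • D b + op a • (op (δ 1) • f b))) := by abel
    rw [z1, z2, z3, z4] at hz
    have hz' : (op b • D a + op (δ b) • f a) - (op a • D b + op (δ a) • f b) = 0 := by
      rw [hz]; abel
    exact sub_eq_zero.mp hz'
  -- Step 4: conclude using 2-torsion-freeness.
  intro x y hc
  have e3 := key2 x y hc
  have hB := Bzero x y hc
  have h2 : D (x * y) + D (x * y)
      = (op y • D x + op (δ y) • f x) + (op y • D x + op (δ y) • f x) := by
    calc D (x * y) + D (x * y)
        = op y • D x + op x • D y + op (δ y) • f x + op (δ x) • f y := e3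
      _ = op y • D x + (op x • D y + op (δ x) • f y) + op (δ y) • f x := by abel
      _ = op y • D x + (op y • D x + op (δ y) • f x) + op (δ y) • f x := by rw [← hB]
      _ = (op y • D x + op (δ y) • f x) + (op y • D x + op (δ y) • f x) := by abel
  have h3 : 2 • (D (x * y) - (op y • D x + op (δ y) • f x)) = 0 := by
    rw [two_smul]
    calc (D (x * y) - (op y • D x + op (δ y) • f x))
          + (D (x * y) - (op y • D x + op (δ y) • f x))
        = (D (x * y) + D (x * y))
          - ((op y • D x + op (δ y) • f x) + (op y • D x + op (δ y) • f x)) := by abel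
      _ = 0 := by rw [h2, sub_self]
  exact sub_eq_zero.mp (htf _ h3)
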